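/- Let n > 2, λ₂, λ₃ > 0, and let ξ be a real random variable with density f(x) = λ₁ exp(−λ₂/xⁿ) 1_{(0,λ₃]}(x) where λ₁ normalizes f to integrate to 1. Then for every q > 0, E[exp(q/ξ²)] < ∞. -/

import Mathlib

open MeasureTheory

theorem integrable_exp_inv_sq_of_density
    {Ω : Type*} [MeasurableSpace Ω] (P : Measure Ω) [IsProbabilityMeasure P]
    (ξ : Ω → ℝ) (hmeas : Measurable ξ)
    (n : ℕ) (hn : 2 < n) (l1 l2 l3 : ℝ) (hl2 : 0 < l2) (hl3 : 0 < l3)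
    (hnorm : l1 * ∫ x in Set.Ioc 0 l3, Real.exp (-l2 / x ^ n) = 1)
    (hlaw : Measure.map ξ P =
      volume.withDensity (fun x =>
        ENNReal.ofReal (Set.indicator (Set.Ioc 0 l3) (fun y => l1 * Real.exp (-l2 / y ^ n)) x)))
    (q : ℝ) (hq : 0 < q) :
    Integrable (fun ω => Real.exp (q / (ξ ω) ^ 2)) P := by
  -- l1 is positive
  have hI : 0 ≤ ∫ x in Set.Ioc 0 l3, Real.exp (-l2 / x ^ n) :=
    integral_nonneg fun x => (Real.exp_pos _).le
  have hl1 : 0 < l1 := by nlinarith [hnorm]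
  set m := n - 2 with hm
  have hmn : n = m + 2 := by omega
  set δ : ℝ := (l2 / q) ^ ((m : ℝ)⁻¹) with hδdef
  have hδpos : 0 < δ := Real.rpow_pos_of_pos (div_pos hl2 hq) _
  have hδm : δ ^ m = l2 / q := Real.rpow_inv_natCast_pow (div_pos hl2 hq).le (by omega)
  set C : ℝ := l1 * Real.exp (q / δ ^ 2) with hCdef
  have hC0 : 0 < C := by positivity
  have hbound : ∀ x ∈ Set.Ioc (0:ℝ) l3,
      Real.exp (q / x ^ 2) * (l1 * Real.exp (-l2 / x ^ n)) ≤ C := by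
    intro x hx
    obtain ⟨hx0, _⟩ := hx
    have hxn : (0:ℝ) < x ^ n := pow_pos hx0 n
    have hx2 : (0:ℝ) < x ^ 2 := pow_pos hx0 2
    have key : q / x ^ 2 + (-l2 / x ^ n) ≤ q / δ ^ 2 := by
      have hneg : -l2 / x ^ n ≤ 0 := div_nonpos_of_nonpos_of_nonneg (by linarith) hxn.le
      rcases le_or_gt x δ with hxd | hxd
      · have h1 : q * x ^ m ≤ l2 := by
          have hp : x ^ m ≤ δ ^ m := pow_le_pow_left₀ hx0.le hxd m
          rw [hδm] at hp
          calc q * x ^ m ≤ q * (l2 / q) := by nlinarith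
            _ = l2 := by field_simp
        have h2 : q / x ^ 2 ≤ l2 / x ^ n := by
          rw [div_le_div_iff₀ hx2 hxn]
          have hxe : x ^ n = x ^ m * x ^ 2 := by rw [hmn, pow_add]
          nlinarith [pow_pos hx0 m]
        have h3 : (0:ℝ) ≤ q / δ ^ 2 := by positivity
        have h4 : -l2 / x ^ n = -(l2 / x ^ n) := by ring
        rw [h4]; linarith
      · have h1 : q / x ^ 2 ≤ q / δ ^ 2 :=
          div_le_div_of_nonneg_left hq.le (pow_pos hδpos 2) (by nlinarith)
        linarith
    calc Real.exp (q / x ^ 2) * (l1 * Real.exp (-l2 / x ^ n))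
        = l1 * Real.exp (q / x ^ 2 + (-l2 / x ^ n)) := by rw [Real.exp_add]; ring
      _ ≤ C := by
          rw [hCdef]
          exact mul_le_mul_of_nonneg_left (Real.exp_le_exp.2 key) hl1.le
  -- measurability of relevant functions
  have hfmeas : Measurable fun x : ℝ => Real.exp (q / x ^ 2) := by
    exact (measurable_const.div (measurable_id.pow_const 2)).exp
  have hdmeas : Measurable fun x : ℝ =>
      ENNReal.ofReal (Set.indicator (Set.Ioc 0 l3) (fun y => l1 * Real.exp (-l2 / y ^ n)) x) := by
    apply Measurable.ennreal_ofReal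
    exact Measurable.indicator (measurable_const.mul
      ((measurable_const.div (measurable_id.pow_const n)).exp)) measurableSet_Ioc
  have hcomp : (fun ω => Real.exp (q / (ξ ω) ^ 2)) = (fun x => Real.exp (q / x ^ 2)) ∘ ξ := rfl
  rw [hcomp, ← integrable_map_measure hfmeas.aestronglyMeasurable hmeas.aemeasurable, hlaw,
    integrable_withDensity_iff hdmeas (ae_of_all _ fun x => ENNReal.ofReal_lt_top)]
  -- now an integrability statement on ℝ
  have hind : ∀ x : ℝ, 0 ≤ Set.indicator (Set.Ioc 0 l3) (fun y => l1 * Real.exp (-l2 / y ^ n)) x := by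
    intro x
    apply Set.indicator_nonneg
    intro y _
    positivity
  have hfun : (fun x : ℝ => Real.exp (q / x ^ 2) *
      (ENNReal.ofReal (Set.indicator (Set.Ioc 0 l3) (fun y => l1 * Real.exp (-l2 / y ^ n)) x)).toReal)
      = fun x => Real.exp (q / x ^ 2) *
        Set.indicator (Set.Ioc 0 l3) (fun y => l1 * Real.exp (-l2 / y ^ n)) x := by
    funext x
    rw [ENNReal.toReal_ofReal (hind x)]
  rw [hfun]
  have hg : Integrable ((Set.Ioc (0:ℝ) l3).indicator fun _ => C) volume := by
    rw [integrable_indicator_iff measurableSet_Ioc]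
    exact integrableOn_const measure_Ioc_lt_top.ne
  apply Integrable.mono' hg
  · exact (hfmeas.mul ((measurable_const.mul
      ((measurable_const.div (measurable_id.pow_const n)).exp)).indicator measurableSet_Ioc)).aestronglyMeasurable
  · apply ae_of_all
    intro x
    rcases em (x ∈ Set.Ioc (0:ℝ) l3) with hx | hx
    · rw [Set.indicator_of_mem hx, Set.indicator_of_mem hx]
      rw [Real.norm_eq_abs, abs_of_nonneg (by positivity)]
      exact hbound x hx
    · rw [Set.indicator_of_notMem hx, Set.indicator_of_notMem hx]
      simp [hC0.le]
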